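/- Under the stated context, there exist nonzero ideals 𝔞 and 𝔶 of O_K such that 𝔞² = C₁·O_K and (C₁x + d√−c)·O_K = 𝔞·𝔶ᵖ. -/
import Mathlib

set_option synthInstance.maxHeartbeats 1000000
set_option maxHeartbeats 1600000

open Polynomial IntermediateField

noncomputable def sqrtneg (c : ℕ) : ℂ := Complex.I * Real.sqrt c

/-- The field `K = ℚ(√-c)`, realised as the subfield of `ℂ` generated by `i·√c`. -/
noncomputable def Kf (c : ℕ) : IntermediateField ℚ ℂ := ℚ⟮sqrtneg c⟯

lemma coprime_of_prime_dvd' (a b : ℕ)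
    (h : ∀ q : ℕ, q.Prime → q ∣ a → q ∣ b → False) : Nat.Coprime a b := by
  rw [Nat.Coprime]
  by_contra hg
  have hq := Nat.minFac_prime (show Nat.gcd a b ≠ 1 from hg)
  exact h _ hq ((Nat.minFac_dvd _).trans (Nat.gcd_dvd_left _ _))
    ((Nat.minFac_dvd _).trans (Nat.gcd_dvd_right _ _))

lemma odd_sq_mod8 (n : ℕ) (h : n % 2 = 1) : n ^ 2 % 8 = 1 := by
  obtain ⟨k, rfl⟩ : ∃ k, n = 2 * k + 1 := ⟨n / 2, by omega⟩
  obtain ⟨r, hr⟩ := Nat.even_mul_succ_self k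
  have hsq : (2 * k + 1) ^ 2 = 4 * (k * (k + 1)) + 1 := by ring
  rw [hsq, hr]
  omega

section AuxIdeals

variable {K : Type*} [Field K] [NumberField K]

local notation "O" => NumberField.RingOfIntegers K

/-- The main ideal-theoretic argument, over an arbitrary number field. -/
lemma aux_ideals (C₁ c d e x y p : ℕ) (hC₁pos : 0 < C₁) (hppos : 0 < p)
    (w : O)
    (hw2 : w ^ 2 = -(c : O))
    (hce : c = C₁ * e)
    (hNid : C₁ ^ 2 * x ^ 2 + c * d ^ 2 = C₁ * y ^ p)
    (hcop4 : Nat.Coprime (4 * C₁ * x ^ 2) (y ^ p))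
    (hzne : (C₁ : O) * x + d * w ≠ 0) :
    ∃ a Y : Ideal O,
      a ≠ ⊥ ∧ Y ≠ ⊥ ∧
      a ^ 2 = Ideal.span {(C₁ : O)} ∧
      Ideal.span {(C₁ : O) * x + d * w} = a * Y ^ p := by
  set z : O := (C₁ : O) * x + d * w with hz
  set zb : O := (C₁ : O) * x - d * w with hzb
  have hNidO : (C₁ : O) ^ 2 * (x : O) ^ 2 + (c : O) * (d : O) ^ 2 = (C₁ : O) * (y : O) ^ p := by
    exact_mod_cast congrArg (fun n : ℕ => (n : O)) hNid
  have hceO : (c : O) = (C₁ : O) * (e : O) := by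
    exact_mod_cast congrArg (fun n : ℕ => (n : O)) hce
  have hzzb : z * zb = (C₁ : O) * (y : O) ^ p := by
    rw [hz, hzb]
    linear_combination hNidO - (d : O) ^ 2 * hw2
  set t : O := (C₁ : O) * (x : O) ^ 2 - (e : O) * (d : O) ^ 2 + 2 * (x : O) * (d : O) * w with ht
  set t' : O := (C₁ : O) * (x : O) ^ 2 - (e : O) * (d : O) ^ 2 - 2 * (x : O) * (d : O) * w with ht'
  have hz2 : z * z = (C₁ : O) * t := by
    rw [hz, ht]
    linear_combination (d : O) ^ 2 * hw2 - (d : O) ^ 2 * hceO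
  have hzb2 : zb * zb = (C₁ : O) * t' := by
    rw [hzb, ht']
    linear_combination (d : O) ^ 2 * hw2 - (d : O) ^ 2 * hceO
  have hsum : z + zb = 2 * (C₁ : O) * (x : O) := by rw [hz, hzb]; ring
  have hC1O : ((C₁ : ℕ) : O) ≠ 0 := by
    exact_mod_cast (Nat.cast_ne_zero (R := O)).mpr hC₁pos.ne'
  set S : Ideal O := Ideal.span {z} with hS
  set T : Ideal O := Ideal.span {zb} with hT
  set a : Ideal O := S ⊔ T with ha
  have hzmem : z ∈ a := Ideal.mem_sup_left (Ideal.mem_span_singleton_self z)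
  have hzbmem : zb ∈ a := Ideal.mem_sup_right (Ideal.mem_span_singleton_self zb)
  have ha2 : a ^ 2 = Ideal.span {(C₁ : O)} := by
    apply le_antisymm
    · rw [sq, ha, Ideal.sup_mul, Ideal.mul_sup, Ideal.mul_sup, hS, hT]
      simp only [Ideal.span_singleton_mul_span_singleton]
      refine sup_le (sup_le ?_ ?_) (sup_le ?_ ?_) <;>
        rw [Ideal.span_singleton_le_span_singleton]
      · exact ⟨t, hz2⟩
      · exact ⟨(y : O) ^ p, hzzb⟩
      · exact ⟨(y : O) ^ p, by rw [mul_comm zb z, hzzb]⟩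
      · exact ⟨t', hzb2⟩
    · rw [Ideal.span_singleton_le_iff_mem]
      obtain ⟨u, v, huv⟩ := (Nat.isCoprime_iff_coprime.mpr hcop4)
      have huvO : (u : O) * (4 * (C₁ : O) * (x : O) ^ 2) + (v : O) * (y : O) ^ p = 1 := by
        have h0 := congrArg (fun n : ℤ => (n : O)) huv
        push_cast at h0
        convert h0 using 2 <;> push_cast <;> ring
      have hC1eq : (C₁ : O) = (u : O) * ((z + zb) * (z + zb)) + (v : O) * (z * zb) := by
        rw [hzzb]
        linear_combination (-(C₁ : O)) * huvO - (u : O) * ((z + zb) + 2 * (C₁ : O) * (x : O)) * hsum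
      rw [hC1eq, sq]
      exact add_mem
        (Ideal.mul_mem_left _ _ (Ideal.mul_mem_mul (add_mem hzmem hzbmem) (add_mem hzmem hzbmem)))
        (Ideal.mul_mem_left _ _ (Ideal.mul_mem_mul hzmem hzbmem))
  have haNe : a ≠ ⊥ := by
    intro h
    rw [h] at ha2
    rw [sq, Ideal.mul_bot] at ha2
    exact hC1O (Ideal.span_singleton_eq_bot.mp ha2.symm)
  have hSne : S ≠ ⊥ := by
    rw [hS, Ne, Ideal.span_singleton_eq_bot]
    exact hzne
  obtain ⟨Y₁, hY₁⟩ : a ∣ S := Ideal.dvd_iff_le.mpr le_sup_left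
  obtain ⟨Y₂, hY₂⟩ : a ∣ T := Ideal.dvd_iff_le.mpr le_sup_right
  have haz : a ≠ 0 := by simpa only [Ideal.zero_eq_bot] using haNe
  have hsupY : Y₁ ⊔ Y₂ = ⊤ := by
    have h1 : a * (Y₁ ⊔ Y₂) = a * ⊤ := by
      rw [Ideal.mul_sup, ← hY₁, ← hY₂, Ideal.mul_top, ha]
    exact mul_left_cancel₀ haz h1
  have hprod : Y₁ * Y₂ = (Ideal.span {(y : O)}) ^ p := by
    have h1 : (a * Y₁) * (a * Y₂) = a ^ 2 * (Y₁ * Y₂) := by ring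
    have h2 : S * T = a ^ 2 * (Ideal.span {(y : O)}) ^ p := by
      calc S * T = Ideal.span {z * zb} := by
            rw [hS, hT, Ideal.span_singleton_mul_span_singleton]
        _ = Ideal.span {(C₁ : O)} * Ideal.span {(y : O) ^ p} := by
            rw [hzzb, Ideal.span_singleton_mul_span_singleton]
        _ = a ^ 2 * (Ideal.span {(y : O)}) ^ p := by
            rw [ha2, Ideal.span_singleton_pow]
    have h3 : a ^ 2 * (Y₁ * Y₂) = a ^ 2 * (Ideal.span {(y : O)}) ^ p := by
      rw [← h1, ← hY₁, ← hY₂, h2]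
    exact mul_left_cancel₀ (pow_ne_zero 2 haz) h3
  have hgcdY : IsUnit (gcd Y₁ Y₂) := by
    rw [Ideal.isUnit_iff, eq_top_iff]
    calc (⊤ : Ideal O) = Y₁ ⊔ Y₂ := hsupY.symm
      _ ≤ gcd Y₁ Y₂ := sup_le (Ideal.le_of_dvd (gcd_dvd_left _ _)) (Ideal.le_of_dvd (gcd_dvd_right _ _))
  obtain ⟨Y, hY⟩ := exists_eq_pow_of_mul_eq_pow hgcdY hprod
  have hY₁ne : Y₁ ≠ ⊥ := by
    intro h
    rw [h, Ideal.mul_bot] at hY₁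
    exact hSne hY₁
  have hYne : Y ≠ ⊥ := by
    intro h
    apply hY₁ne
    have hb : (⊥ : Ideal O) ^ p = ⊥ := by
      simpa only [Ideal.zero_eq_bot] using (zero_pow (M₀ := Ideal O) hppos.ne')
    rw [hY, h, hb]
  exact ⟨a, Y, haNe, hYne, ha2, by rw [← hY, ← hY₁, hS]⟩

end AuxIdeals

theorem stmt3 (C₁ C₂ c d : ℕ) (hC₁pos : 0 < C₁) (hC₁sqf : Squarefree C₁)
    (hC₂pos : 0 < C₂) (hcop : Nat.gcd C₁ C₂ = 1) (hmod8 : C₁ * C₂ % 8 ≠ 7)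
    (hcpos : 0 < c) (hdpos : 0 < d) (hcsqf : Squarefree c)
    (hfact : C₁ * C₂ = c * d ^ 2)
    (p : ℕ) (hp : p.Prime) (hpodd : Odd p)
    (x y : ℕ) (hxpos : 0 < x) (hypos : 0 < y)
    (heq : C₁ * x ^ 2 + C₂ = y ^ p)
    (hgcd : Nat.gcd (Nat.gcd (C₁ * x ^ 2) C₂) (y ^ p) = 1) :
    ∃ a Y : Ideal (NumberField.RingOfIntegers (Kf c)),
      a ≠ ⊥ ∧ Y ≠ ⊥ ∧
      a ^ 2 = Ideal.span {(C₁ : NumberField.RingOfIntegers (Kf c))} ∧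
      ∃ z : NumberField.RingOfIntegers (Kf c),
        ((algebraMap (NumberField.RingOfIntegers (Kf c)) (Kf c) z : Kf c) : ℂ)
          = (C₁ : ℂ) * (x : ℂ) + (d : ℂ) * sqrtneg c ∧
        Ideal.span {z} = a * Y ^ p := by
  ----------------------------------------------------------------
  -- Part 1 : elementary number theory
  ----------------------------------------------------------------
  have hppos : 0 < p := hp.pos
  have hp3 : 3 ≤ p := by
    rcases hpodd with ⟨k, hk⟩
    have := hp.two_le
    omega
  have hkey : ∀ q : ℕ, q.Prime → q ∣ y ^ p → q ∣ C₁ * x ^ 2 → False := by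
    intro q hq hqy hqc
    have hC2 : C₂ = y ^ p - C₁ * x ^ 2 := by omega
    have h2 : q ∣ C₂ := hC2 ▸ Nat.dvd_sub hqy hqc
    exact hq.one_lt.ne' (Nat.dvd_one.mp (hgcd ▸ Nat.dvd_gcd (Nat.dvd_gcd hqc h2) hqy))
  have hyodd : y % 2 = 1 := by
    by_contra h
    have h2y : 2 ∣ y := by omega
    have h2yp : 2 ∣ y ^ p := dvd_pow h2y hppos.ne'
    have hC1x2 : ¬ 2 ∣ C₁ * x ^ 2 := fun h' => hkey 2 Nat.prime_two h2yp h'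
    have hC2odd : ¬ 2 ∣ C₂ := by
      intro h'
      exact hC1x2 (by omega)
    have hxodd : x % 2 = 1 := by
      rcases Nat.even_or_odd x with he | ho
      · exact absurd (Dvd.dvd.mul_left (dvd_pow he.two_dvd (by norm_num)) C₁) hC1x2
      · exact Nat.odd_iff.mp ho
    have hC1odd : C₁ % 2 = 1 := by
      rcases Nat.even_or_odd C₁ with he | ho
      · exact absurd (he.two_dvd.mul_right _) hC1x2
      · exact Nat.odd_iff.mp ho
    have h8 : 8 ∣ y ^ p := by
      obtain ⟨m, rfl⟩ := h2y
      calc (8:ℕ) = 2 ^ 3 := by norm_num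
        _ ∣ 2 ^ p := pow_dvd_pow 2 hp3
        _ ∣ (2 * m) ^ p := pow_dvd_pow_of_dvd (dvd_mul_right 2 m) p
    obtain ⟨r, hr⟩ := h8
    obtain ⟨q1, hq1⟩ : ∃ q1, x ^ 2 = 8 * q1 + 1 := ⟨x ^ 2 / 8, by have := odd_sq_mod8 x hxodd; omega⟩
    have hx8 : C₁ * x ^ 2 = 8 * (C₁ * q1) + C₁ := by rw [hq1]; ring
    obtain ⟨s, hs⟩ : ∃ s, C₁ + C₂ = 8 * s := ⟨r - (C₁ * q1), by omega⟩
    have h1 : C₁ ^ 2 + C₁ * C₂ = 8 * (C₁ * s) := by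
      have h1' : C₁ ^ 2 + C₁ * C₂ = C₁ * (C₁ + C₂) := by ring
      rw [h1', hs]; ring
    have h3 := odd_sq_mod8 C₁ hC1odd
    omega
  have hcop4 : Nat.Coprime (4 * C₁ * x ^ 2) (y ^ p) := by
    apply coprime_of_prime_dvd'
    intro q hq h1 h2
    have h4' : q ∣ 4 * (C₁ * x ^ 2) := by rwa [← mul_assoc]
    rcases (Nat.Prime.dvd_mul hq).mp h4' with h4 | hcx
    · have hq2 : q = 2 := by
        rw [show (4:ℕ) = 2 ^ 2 by norm_num] at h4
        exact (Nat.prime_dvd_prime_iff_eq hq Nat.prime_two).mp (hq.dvd_of_dvd_pow h4)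
      subst hq2
      have : 2 ∣ y := hq.dvd_of_dvd_pow h2
      omega
    · exact hkey q hq h2 hcx
  have hC1d : Nat.Coprime C₁ d := by
    apply coprime_of_prime_dvd'
    intro q hq h1 h2
    have hq2 : q ^ 2 ∣ c * d ^ 2 := Dvd.dvd.mul_left (pow_dvd_pow_of_dvd h2 2) c
    rw [← hfact] at hq2
    have hqC2 : ¬ q ∣ C₂ := by
      intro h'
      exact hq.one_lt.ne' (Nat.dvd_one.mp (hcop ▸ Nat.dvd_gcd h1 h'))
    have hqcop : Nat.Coprime q C₂ := (Nat.Prime.coprime_iff_not_dvd hq).mpr hqC2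
    have hqq : q ^ 2 ∣ C₁ := (hqcop.pow_left 2).dvd_of_dvd_mul_right hq2
    exact hq.one_lt.ne' (Nat.isUnit_iff.mp (hC₁sqf q (by rwa [pow_two] at hqq)))
  have hC1c : C₁ ∣ c := by
    have h1 : C₁ ∣ c * d ^ 2 := hfact ▸ dvd_mul_right C₁ C₂
    exact (Nat.Coprime.pow_right 2 hC1d).dvd_of_dvd_mul_right h1
  obtain ⟨e, hce⟩ := hC1c
  have hNid : C₁ ^ 2 * x ^ 2 + c * d ^ 2 = C₁ * y ^ p := by
    have h1 : C₁ ^ 2 * x ^ 2 + c * d ^ 2 = C₁ * (C₁ * x ^ 2 + C₂) := by rw [← hfact]; ring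
    rw [h1, heq]
  ----------------------------------------------------------------
  -- Part 2 : the field and the element w
  ----------------------------------------------------------------
  have hsqc : ((Real.sqrt c : ℝ) : ℂ) ^ 2 = (c : ℂ) := by
    rw [← Complex.ofReal_pow, Real.sq_sqrt (Nat.cast_nonneg c)]
    norm_num
  have hsq : (sqrtneg c) ^ 2 = -(c : ℂ) := by
    rw [sqrtneg, mul_pow, Complex.I_sq, hsqc]; ring
  have hmem : sqrtneg c ∈ Kf c := mem_adjoin_simple_self ℚ _
  have hintC : IsIntegral ℤ (sqrtneg c) := by
    refine ⟨X ^ 2 + C (c : ℤ), monic_X_pow_add_C _ (by norm_num), ?_⟩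
    simp [hsq]
  have hintQ : IsIntegral ℚ (sqrtneg c) := hintC.tower_top
  haveI : FiniteDimensional ℚ (Kf c) := IntermediateField.adjoin.finiteDimensional hintQ
  haveI : NumberField (Kf c) := ⟨⟩
  have hintα : IsIntegral ℤ (⟨sqrtneg c, hmem⟩ : Kf c) := by
    rwa [← isIntegral_algebraMap_iff (algebraMap (Kf c) ℂ).injective]
  let w : NumberField.RingOfIntegers (Kf c) := ⟨⟨sqrtneg c, hmem⟩, hintα⟩
  let f : NumberField.RingOfIntegers (Kf c) →+* ℂ :=
    (algebraMap (Kf c) ℂ).comp (algebraMap (NumberField.RingOfIntegers (Kf c)) (Kf c))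
  have hf : Function.Injective f :=
    (algebraMap (Kf c) ℂ).injective.comp (fun a b h => NumberField.RingOfIntegers.ext h)
  have hfw : f w = sqrtneg c := rfl
  have hw2 : w ^ 2 = -((c : ℕ) : NumberField.RingOfIntegers (Kf c)) := by
    apply hf
    rw [map_pow, hfw, hsq, map_neg, map_natCast]
  have hfz : f ((C₁ : NumberField.RingOfIntegers (Kf c)) * x + d * w)
      = (C₁ : ℂ) * (x : ℂ) + (d : ℂ) * sqrtneg c := by
    rw [map_add, map_mul, map_mul, hfw, map_natCast, map_natCast, map_natCast]
  have hzne : (C₁ : NumberField.RingOfIntegers (Kf c)) * x + d * w ≠ 0 := by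
    intro h
    rw [h, map_zero] at hfz
    have him := congrArg Complex.im hfz
    simp [sqrtneg, Complex.add_im, Complex.mul_im] at him
    omega
  ----------------------------------------------------------------
  -- Part 3 : conclusion
  ----------------------------------------------------------------
  obtain ⟨a, Y, haNe, hYne, ha2, hspan⟩ :=
    aux_ideals C₁ c d e x y p hC₁pos hppos w hw2 hce hNid hcop4 hzne
  exact ⟨a, Y, haNe, hYne, ha2, (C₁ : NumberField.RingOfIntegers (Kf c)) * x + d * w, hfz, hspan⟩
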